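/- (One-stage selection: demographic parity strictly beats group-oblivious.) Suppose α₁ ≠ 1/2. Let t ∈ ℝ satisfy Φ^c(t) = α₁ (the demographic-parity thresholds t_A = t_B = t), and let (u_A, u_B) be the unique pair with s_A u_A = s_B u_B and p_A·Φ^c(u_A) + p_B·Φ^c(u_B) = α₁ (the group-oblivious thresholds). Then p_A·φ(t)/s_A + p_B·φ(t)/s_B > p_A·φ(u_A)/s_A + p_B·φ(u_B)/s_B; equivalently, the expected quality of a selected candidate μ + (σ_W²/α₁)(p_A φ(t_A)/s_A + p_B φ(t_B)/s_B) is strictly larger under demographic parity than under the group-oblivious selection. -/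

import Mathlib

open MeasureTheory Set

/-- Standard normal density. -/
noncomputable def phi (t : ℝ) : ℝ := Real.exp (-t ^ 2 / 2) / Real.sqrt (2 * Real.pi)

/-- Standard normal CDF. -/
noncomputable def Phi (t : ℝ) : ℝ := ∫ u in Set.Iic t, phi u

/-- Standard normal complementary CDF. -/
noncomputable def Phic (t : ℝ) : ℝ := 1 - Phi t

lemma phi_pos (t : ℝ) : 0 < phi t := by
  unfold phi; positivity

@[fun_prop]
lemma phi_cont : Continuous phi := by
  unfold phi; fun_prop

lemma phi_integrable : Integrable phi := by
  have h := (integrable_exp_neg_mul_sq (by norm_num : (0:ℝ) < 1/2)).div_const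
    (Real.sqrt (2*Real.pi))
  convert h using 2 with x
  unfold phi
  ring_nf

lemma Phi_sub (a b : ℝ) : Phi b - Phi a = ∫ x in a..b, phi x := by
  unfold Phi
  exact intervalIntegral.integral_Iic_sub_Iic phi_integrable.integrableOn
    phi_integrable.integrableOn

lemma hasDerivAt_phi (x : ℝ) : HasDerivAt phi (-x * phi x) x := by
  have h1 : HasDerivAt (fun y : ℝ => -y^2/2) (-x) x := by
    have : HasDerivAt (fun y : ℝ => -y^2/2) (-((2:ℕ) * x ^ (2 - 1)) / 2) x :=
      ((hasDerivAt_pow 2 x).neg.div_const 2)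
    convert this using 1
    ring
  have h2 := (h1.exp).div_const (Real.sqrt (2*Real.pi))
  have : -x * phi x = Real.exp (-x^2/2) * -x / Real.sqrt (2*Real.pi) := by
    unfold phi; ring
  rw [this]
  exact h2

lemma phi_sub (a b : ℝ) : phi a - phi b = ∫ x in a..b, x * phi x := by
  have hc : Continuous (fun x : ℝ => -x * phi x) := (continuous_neg.mul phi_cont)
  have h : ∫ x in a..b, -x * phi x = phi b - phi a :=
    intervalIntegral.integral_eq_sub_of_hasDerivAt (fun x _ => hasDerivAt_phi x)
      (hc.intervalIntegrable a b)
  have h2 : (∫ x in a..b, -x * phi x) = -∫ x in a..b, x * phi x := by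
    rw [← intervalIntegral.integral_neg]
    congr 1; funext x; ring
  rw [h2] at h
  linarith

lemma key_nonneg (t u : ℝ) : 0 ≤ ∫ x in t..u, (x - t) * phi x := by
  have hcont : Continuous (fun x => (x - t) * phi x) :=
    ((continuous_id.sub continuous_const).mul phi_cont)
  rcases le_or_gt t u with hle | hlt
  · apply intervalIntegral.integral_nonneg hle
    intro x hx
    exact mul_nonneg (by linarith [hx.1]) (phi_pos x).le
  · rw [intervalIntegral.integral_symm]
    have h0 : 0 ≤ ∫ x in u..t, (t - x) * phi x :=
      intervalIntegral.integral_nonneg hlt.le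
        (fun x hx => mul_nonneg (by linarith [hx.2]) (phi_pos x).le)
    have h1 : (∫ x in u..t, (t - x) * phi x) = -∫ x in u..t, (x - t) * phi x := by
      rw [← intervalIntegral.integral_neg]
      congr 1; funext x; ring
    linarith [h1 ▸ h0]

lemma key_pos {t u : ℝ} (h : u ≠ t) : 0 < ∫ x in t..u, (x - t) * phi x := by
  have hcont : Continuous (fun x => (x - t) * phi x) :=
    ((continuous_id.sub continuous_const).mul phi_cont)
  rcases lt_or_gt_of_ne h with hlt | hgt
  · rw [intervalIntegral.integral_symm]
    have : (∫ x in u..t, (x - t) * phi x) < 0 := by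
      have := intervalIntegral.intervalIntegral_pos_of_pos_on
        (f := fun x => -((x - t) * phi x)) (hcont.neg.intervalIntegrable u t)
        (fun x hx => by
          have := phi_pos x
          have : 0 < (t - x) * phi x := mul_pos (by linarith [hx.2]) (phi_pos x)
          nlinarith) hlt
      rw [intervalIntegral.integral_neg] at this
      linarith
    linarith
  · apply intervalIntegral.intervalIntegral_pos_of_pos_on (hcont.intervalIntegrable t u) _ hgt
    intro x hx
    exact mul_pos (by linarith [hx.1]) (phi_pos x)

lemma J_pos {t u : ℝ} (h : t < u) : 0 < ∫ x in t..u, phi x :=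
  intervalIntegral.intervalIntegral_pos_of_pos (phi_cont.intervalIntegrable t u) phi_pos h

lemma J_nonneg {t u : ℝ} (h : t ≤ u) : 0 ≤ ∫ x in t..u, phi x :=
  intervalIntegral.integral_nonneg h (fun x _ => (phi_pos x).le)

lemma Phi_zero : Phi 0 = 1/2 := by
  have htot : ∫ x : ℝ, phi x = 1 := by
    have h := integral_gaussian (1/2 : ℝ)
    have heq : ∀ x : ℝ, phi x = Real.exp (-(1/2) * x^2) / Real.sqrt (2*Real.pi) := by
      intro x; unfold phi; ring_nf
    calc ∫ x : ℝ, phi x = ∫ x : ℝ, Real.exp (-(1/2) * x^2) / Real.sqrt (2*Real.pi) := by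
          simp_rw [heq]
      _ = (∫ x : ℝ, Real.exp (-(1/2) * x^2)) / Real.sqrt (2*Real.pi) := integral_div _ _
      _ = 1 := by
          rw [h]
          rw [show (Real.pi / (1/2)) = 2 * Real.pi by ring]
          rw [div_self]
          positivity
  have hsym : (∫ x in Iic (0:ℝ), phi x) = ∫ x in Ioi (0:ℝ), phi x := by
    rw [show (Ioi (0:ℝ)) = Ioi (-(0:ℝ)) by norm_num, ← integral_comp_neg_Iic]
    congr 1; funext x
    unfold phi; rw [show (-x)^2 = x^2 from by ring]
  have hsplit : (∫ x in Iic (0:ℝ), phi x) + (∫ x in Ioi (0:ℝ), phi x) = ∫ x : ℝ, phi x :=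
    intervalIntegral.integral_Iic_add_Ioi phi_integrable.integrableOn phi_integrable.integrableOn
  unfold Phi
  rw [htot, ← hsym] at hsplit
  linarith

/-- One-stage selection: if `α₁ ≠ 1/2`, the demographic-parity thresholds
`t_A = t_B = t` (with `Φᶜ(t) = α₁`) yield a strictly larger value of
`p_A φ(t_A)/s_A + p_B φ(t_B)/s_B` — hence a strictly larger expected quality of
a selected candidate — than the group-oblivious thresholds `(u_A, u_B)`. -/
theorem demographic_parity_beats_group_oblivious_one_stage
    (μ σW σA σB pA α₁ t uA uB : ℝ)
    (hσW : 0 < σW) (hσB : 0 ≤ σB) (hσAB : σB < σA)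
    (hpA : pA ∈ Set.Ioo (0 : ℝ) 1) (hα : α₁ ∈ Set.Ioo (0 : ℝ) 1)
    (hαhalf : α₁ ≠ 1 / 2)
    (ht : Phic t = α₁)
    (hu : Real.sqrt (σW ^ 2 + σA ^ 2) * uA = Real.sqrt (σW ^ 2 + σB ^ 2) * uB)
    (hub : pA * Phic uA + (1 - pA) * Phic uB = α₁) :
    pA * phi uA / Real.sqrt (σW ^ 2 + σA ^ 2)
      + (1 - pA) * phi uB / Real.sqrt (σW ^ 2 + σB ^ 2)
    < pA * phi t / Real.sqrt (σW ^ 2 + σA ^ 2)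
      + (1 - pA) * phi t / Real.sqrt (σW ^ 2 + σB ^ 2) := by
  obtain ⟨hpA0, hpA1⟩ := hpA
  set sA := Real.sqrt (σW ^ 2 + σA ^ 2) with hsAdef
  set sB := Real.sqrt (σW ^ 2 + σB ^ 2) with hsBdef
  have hsB : 0 < sB := Real.sqrt_pos.mpr (by positivity)
  have hsAB : sB < sA := by
    apply Real.sqrt_lt_sqrt (by positivity)
    have : σB ^ 2 < σA ^ 2 := by nlinarith
    linarith
  have hsA : 0 < sA := hsB.trans hsAB
  clear_value sA sB
  set JA := ∫ x in t..uA, phi x with hJA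
  set JB := ∫ x in t..uB, phi x with hJB
  set EA := ∫ x in t..uA, (x - t) * phi x with hEA
  set EB := ∫ x in t..uB, (x - t) * phi x with hEB
  -- constraint: pA * JA + (1-pA) * JB = 0
  have hcA : Phic uA = Phic t - JA := by
    unfold Phic; rw [hJA, ← Phi_sub]; ring
  have hcB : Phic uB = Phic t - JB := by
    unfold Phic; rw [hJB, ← Phi_sub]; ring
  have h1 : pA * JA + (1 - pA) * JB = 0 := by
    rw [hcA, hcB, ht] at hub; linarith
  -- decomposition: phi t - phi u = E + t * J
  have hdecomp : ∀ u : ℝ, phi t - phi u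
      = (∫ x in t..u, (x - t) * phi x) + t * ∫ x in t..u, phi x := by
    intro u
    have hs := phi_sub t u
    have hsplit : (∫ x in t..u, x * phi x)
        = ∫ x in t..u, ((x - t) * phi x + t * phi x) := by
      congr 1; funext x; ring
    rw [intervalIntegral.integral_add
        ((by fun_prop : Continuous fun x : ℝ => (x - t) * phi x).intervalIntegrable t u)
        ((by fun_prop : Continuous fun x : ℝ => t * phi x).intervalIntegrable t u),
      intervalIntegral.integral_const_mul] at hsplit
    rw [hs, hsplit]
  have dA : phi t - phi uA = EA + t * JA := hdecomp uA
  have dB : phi t - phi uB = EB + t * JB := hdecomp uB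
  -- uA ≠ uB
  have hne : uA ≠ uB := by
    intro heq
    have huB0 : uB = 0 := by
      rw [heq] at hu
      have h0 : (sA - sB) * uB = 0 := by linarith [hu]
      rcases mul_eq_zero.mp h0 with h | h
      · linarith
      · exact h
    have huA0 : uA = 0 := by rw [heq, huB0]
    rw [huA0, huB0] at hub
    have hv : Phic 0 = α₁ := by linarith [hub]
    unfold Phic at hv
    rw [Phi_zero] at hv
    exact hαhalf (by linarith)
  -- strict positivity of E-part
  have hEAnn : 0 ≤ EA := key_nonneg t uA
  have hEBnn : 0 ≤ EB := key_nonneg t uB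
  have hEpos : 0 < pA / sA * EA + (1 - pA) / sB * EB := by
    rcases ne_or_eq uA t with h | h
    · have hk := key_pos h
      have h2 : 0 < pA / sA * EA := mul_pos (div_pos hpA0 hsA) (hEA ▸ hk)
      have h3 : 0 ≤ (1 - pA) / sB * EB :=
        mul_nonneg (div_nonneg (by linarith) hsB.le) hEBnn
      linarith
    · have huBt : uB ≠ t := fun hh => hne (h.trans hh.symm)
      have hk := key_pos huBt
      have h2 : 0 < (1 - pA) / sB * EB :=
        mul_pos (div_pos (by linarith) hsB) (hEB ▸ hk)
      have h3 : 0 ≤ pA / sA * EA :=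
        mul_nonneg (div_nonneg hpA0.le hsA.le) hEAnn
      linarith
  -- sign: t * JA ≤ 0
  have htJA : t * JA ≤ 0 := by
    rcases lt_trichotomy t 0 with htneg | ht0 | htpos
    · have huAt : t ≤ uA := by
        by_contra hcon
        push_neg at hcon
        have huA0 : uA < 0 := hcon.trans htneg
        have hlt1 : sB * uB < sB * uA := by
          have hneg : (sA - sB) * uA < 0 :=
            mul_neg_of_pos_of_neg (by linarith) huA0
          calc sB * uB = sA * uA := hu.symm
            _ = sB * uA + (sA - sB) * uA := by ring
            _ < sB * uA := by linarith
        have huBA : uB < uA := lt_of_mul_lt_mul_left hlt1 hsB.le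
        have hsymA : JA = -∫ x in uA..t, phi x := intervalIntegral.integral_symm uA t
        have hsymB : JB = -∫ x in uB..t, phi x := intervalIntegral.integral_symm uB t
        have hJAneg : JA < 0 := by rw [hsymA]; linarith [J_pos hcon]
        have hJBneg : JB < 0 := by rw [hsymB]; linarith [J_pos (huBA.trans hcon)]
        have p1 : 0 < pA * -JA := mul_pos hpA0 (by linarith)
        have p2 : 0 < (1 - pA) * -JB := mul_pos (by linarith) (by linarith)
        linarith [h1]
      exact mul_nonpos_of_nonpos_of_nonneg htneg.le (J_nonneg huAt)
    · simp [ht0]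
    · have huAt : uA ≤ t := by
        by_contra hcon
        push_neg at hcon
        have huA0 : 0 < uA := htpos.trans hcon
        have hlt1 : sB * uA < sB * uB := by
          have hposd : 0 < (sA - sB) * uA :=
            mul_pos (by linarith) huA0
          calc sB * uA = sA * uA - (sA - sB) * uA := by ring
            _ < sA * uA := by linarith
            _ = sB * uB := hu
        have huBA : uA < uB := lt_of_mul_lt_mul_left hlt1 hsB.le
        have p1 : 0 < pA * JA := mul_pos hpA0 (J_pos hcon)
        have p2 : 0 < (1 - pA) * JB := mul_pos (by linarith) (J_pos (hcon.trans huBA))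
        linarith [h1]
      have hJAle : JA ≤ 0 := by
        have hnn := J_nonneg (t := uA) (u := t) huAt
        have hsymA : JA = -∫ x in uA..t, phi x := intervalIntegral.integral_symm uA t
        linarith
      exact mul_nonpos_of_nonneg_of_nonpos htpos.le hJAle
  clear_value JA JB EA EB
  -- the J-part is nonneg
  have hJpart : 0 ≤ t * (pA / sA * JA + (1 - pA) / sB * JB) := by
    have hrw : t * (pA / sA * JA + (1 - pA) / sB * JB)
        = pA * ((t * JA) * (1 / sA - 1 / sB)) := by
      linear_combination (t / sB) * h1
    rw [hrw]
    have hinv : 1 / sA - 1 / sB ≤ 0 := by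
      have : 1 / sA < 1 / sB := one_div_lt_one_div_of_lt hsB hsAB
      linarith
    have hp := mul_nonneg (neg_nonneg.2 htJA) (neg_nonneg.2 hinv)
    have hp2 : 0 ≤ (t * JA) * (1 / sA - 1 / sB) := by nlinarith [hp]
    exact mul_nonneg hpA0.le hp2
  -- combine
  have hfinal : 0 < pA / sA * (phi t - phi uA) + (1 - pA) / sB * (phi t - phi uB) := by
    have heq : pA / sA * (phi t - phi uA) + (1 - pA) / sB * (phi t - phi uB)
        = (pA / sA * EA + (1 - pA) / sB * EB)
          + t * (pA / sA * JA + (1 - pA) / sB * JB) := by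
      rw [dA, dB]; ring
    rw [heq]
    linarith
  have e1 : pA * phi uA / sA = pA / sA * phi uA := by ring
  have e2 : (1 - pA) * phi uB / sB = (1 - pA) / sB * phi uB := by ring
  have e3 : pA * phi t / sA = pA / sA * phi t := by ring
  have e4 : (1 - pA) * phi t / sB = (1 - pA) / sB * phi t := by ring
  rw [e1, e2, e3, e4]
  linarith [hfinal]
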